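/- Let (X,d) be a metric space, let K ⊆ X be nonempty compact, and let u be a normal fuzzy set on X. If δ := d_S(χ_K, u) < 1, then the Hausdorff distance satisfies d_H(K, u_α) ≤ δ for every level α ∈ [0, 1−δ] (where u_α denotes the α-level for α > 0 and u₀ for α = 0). -/

import Mathlib

open Metric Set Topology Filter

/-- A normal fuzzy set on a metric space: an upper semicontinuous function `u : X → [0,1]`
whose support-closure `u₀` is compact and whose core `u₁` is nonempty. -/
structure NormalFuzzySet (X : Type*) [MetricSpace X] where
  toFun : X → ℝ
  mem_Icc' : ∀ x, toFun x ∈ Set.Icc (0 : ℝ) 1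
  upperSemicontinuous' : UpperSemicontinuous toFun
  isCompact_closure_support' : IsCompact (closure {x | 0 < toFun x})
  core_nonempty' : {x | 1 ≤ toFun x}.Nonempty

namespace NormalFuzzySet

variable {X : Type*} [MetricSpace X]

/-- The α-level of a normal fuzzy set: `u₀` (the closure of the support) for `α ≤ 0`,
and `{x | u x ≥ α}` for `α > 0`. -/
noncomputable def level (u : NormalFuzzySet X) (α : ℝ) : Set X :=
  if α ≤ 0 then closure {x | 0 < u.toFun x} else {x | α ≤ u.toFun x}

/-- The sendograph of a normal fuzzy set, a subset of `X × ℝ`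
(whose product metric is exactly `d̄((x,α),(y,β)) = max (d x y) |α - β|`). -/
def sendograph (u : NormalFuzzySet X) : Set (X × ℝ) :=
  {p : X × ℝ | p.1 ∈ closure {x | 0 < u.toFun x} ∧ 0 ≤ p.2 ∧ p.2 ≤ u.toFun p.1}

/-- The endograph of a normal fuzzy set. -/
def endograph (u : NormalFuzzySet X) : Set (X × ℝ) :=
  {p : X × ℝ | 0 ≤ p.2 ∧ p.2 ≤ u.toFun p.1}

end NormalFuzzySet

lemma sendograph_isCompact {X : Type*} [MetricSpace X] (u : NormalFuzzySet X) :
    IsCompact u.sendograph := by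
  have hclosed : IsClosed u.sendograph := by
    have h1 : IsClosed {p : X × ℝ | p.1 ∈ closure {x | 0 < u.toFun x}} :=
      isClosed_closure.preimage continuous_fst
    have h2 : IsClosed {p : X × ℝ | 0 ≤ p.2} :=
      isClosed_le continuous_const continuous_snd
    have h3 : IsClosed {p : X × ℝ | p.2 ≤ u.toFun p.1} := by
      rw [← isOpen_compl_iff, isOpen_iff_mem_nhds]
      rintro ⟨x, t⟩ (h : ¬ t ≤ u.toFun x)
      push_neg at h
      obtain ⟨c, hc1, hc2⟩ := exists_between h
      have hx := u.upperSemicontinuous' x c hc1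
      have hmem : {p : X × ℝ | u.toFun p.1 < c ∧ c < p.2} ∈ 𝓝 (x, t) := by
        rw [nhds_prod_eq]
        exact Filter.prod_mem_prod hx (Ioi_mem_nhds hc2)
      filter_upwards [hmem] with p hp
      exact fun hcon => absurd (hcon.trans hp.1.le) (not_le.2 hp.2)
    exact (h1.inter (h2.inter h3))
  refine (u.isCompact_closure_support'.prod (isCompact_Icc (a := (0:ℝ)) (b := 1))).of_isClosed_subset hclosed ?_
  rintro ⟨x, t⟩ ⟨hx, h0, h1⟩
  exact ⟨hx, h0, h1.trans (u.mem_Icc' x).2⟩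

lemma sendograph_nonempty {X : Type*} [MetricSpace X] (u : NormalFuzzySet X) :
    u.sendograph.Nonempty := by
  obtain ⟨x, hx⟩ := u.core_nonempty'
  exact ⟨(x, 0), subset_closure (show 0 < u.toFun x from lt_of_lt_of_le one_pos hx), le_refl 0,
    (u.mem_Icc' x).1⟩

/-- If `δ := d_S(χ_K, u) < 1`, then `d_H(K, u_α) ≤ δ` for every `α ∈ [0, 1 - δ]`.
Here `d_S(χ_K, u)` is the Hausdorff distance between `send(χ_K) = K × [0,1]` and
`send(u)` in `X × ℝ`. -/
theorem hausdorffDist_level_le_of_sendographDist_lt_one {X : Type*} [MetricSpace X]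
    (K : Set X) (hK : IsCompact K) (hKne : K.Nonempty) (u : NormalFuzzySet X) (δ : ℝ)
    (hδ : δ = hausdorffDist (K ×ˢ Icc (0 : ℝ) 1) u.sendograph) (hδ1 : δ < 1) :
    ∀ α ∈ Icc (0 : ℝ) (1 - δ), hausdorffDist K (u.level α) ≤ δ := by
  have hδ0 : 0 ≤ δ := hδ ▸ hausdorffDist_nonneg
  have hKI : IsCompact (K ×ˢ Icc (0 : ℝ) 1) := hK.prod isCompact_Icc
  have hKIne : (K ×ˢ Icc (0 : ℝ) 1).Nonempty :=
    hKne.prod (nonempty_Icc.2 zero_le_one)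
  have hS := sendograph_isCompact u
  have hSne := sendograph_nonempty u
  have hfin : EMetric.hausdorffEdist (K ×ˢ Icc (0 : ℝ) 1) u.sendograph ≠ ⊤ :=
    hausdorffEdist_ne_top_of_nonempty_of_bounded hKIne hSne hKI.isBounded hS.isBounded
  rintro α ⟨hα0, hα1⟩
  apply hausdorffDist_le_of_mem_dist hδ0
  · -- from K to level α
    intro x hx
    obtain ⟨⟨y, β⟩, hyS, hyd⟩ := hS.exists_infDist_eq_dist hSne (x, 1)
    have hdist : dist (x, (1:ℝ)) (y, β) ≤ δ := by
      rw [← hyd, hδ]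
      exact infDist_le_hausdorffDist_of_mem ⟨hx, zero_le_one, le_refl 1⟩ hfin
    rw [Prod.dist_eq, max_le_iff] at hdist
    have hβ : α ≤ β := by
      have := abs_le.1 (Real.dist_eq 1 β ▸ hdist.2)
      linarith [this.2]
    refine ⟨y, ?_, hdist.1⟩
    unfold NormalFuzzySet.level
    split_ifs with h
    · exact hyS.1
    · exact hβ.trans hyS.2.2
  · -- from level α to K
    intro y hy
    have hymem : (y, α) ∈ u.sendograph := by
      unfold NormalFuzzySet.level at hy
      split_ifs at hy with h
      · exact ⟨hy, hα0, (u.mem_Icc' y).1.trans' (le_antisymm h hα0).le⟩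
      · exact ⟨subset_closure (lt_of_lt_of_le (lt_of_not_ge h) hy), hα0, hy⟩
    obtain ⟨⟨x, γ⟩, hxK, hxd⟩ := hKI.exists_infDist_eq_dist hKIne (y, α)
    have hdist : dist (y, α) (x, γ) ≤ δ := by
      rw [← hxd, hδ, hausdorffDist_comm]
      exact infDist_le_hausdorffDist_of_mem hymem
        (by rw [hausdorffEDist_comm]; exact hfin)
    rw [Prod.dist_eq, max_le_iff] at hdist
    exact ⟨x, hxK.1, hdist.1⟩
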